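/- arXiv:2112.13084 — 3 statements merged into one kernel-verified Lean document; each statement's English description precedes it below -/
import Mathlib

section
/- The group presented by ⟨b, u | bub = u⟩ is torsion-free. -/
open Multiplicative

def kleinRels : Set (FreeGroup Bool) :=
  {FreeGroup.of false * FreeGroup.of true * FreeGroup.of false * (FreeGroup.of true)⁻¹}

/-- The group `⟨b, u | bub = u⟩`. -/
def KleinGroup := PresentedGroup kleinRels

instance : Group KleinGroup := by unfold KleinGroup; infer_instance

abbrev Mz := Multiplicative ℤ

def negφ : Mz →* MulAut Mz := zpowersHom _ (MulEquiv.inv Mz)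

abbrev Kb := Mz ⋊[negφ] Mz

lemma invsq : MulEquiv.inv Mz ^ 2 = 1 := by
  ext x; simp [pow_succ, MulEquiv.inv]; exact inv_inv x

def B : KleinGroup := PresentedGroup.of false
def U : KleinGroup := PresentedGroup.of true

lemma rel : B * U * B * U⁻¹ = 1 := by
  have : PresentedGroup.mk kleinRels
      (FreeGroup.of false * FreeGroup.of true * FreeGroup.of false * (FreeGroup.of true)⁻¹) = 1 := by
    apply (QuotientGroup.eq_one_iff _).2
    exact Subgroup.subset_normalClosure rfl
  simp only [map_mul, map_inv] at this; exact this

lemma key : U * B * U⁻¹ = B⁻¹ := by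
  have h : B * (U * B * U⁻¹) = 1 := by rw [← mul_assoc, ← mul_assoc]; exact rel
  exact ((mul_eq_one_iff_inv_eq).mp h).symm

lemma key2 : U * B⁻¹ * U⁻¹ = B := by
  have := congrArg (·⁻¹) key
  simpa [mul_inv_rev, mul_assoc] using this

lemma hub : U * B = B⁻¹ * U := mul_inv_eq_iff_eq_mul.mp key

lemma hub' : U * B⁻¹ = B * U := mul_inv_eq_iff_eq_mul.mp key2

lemma commU2 : Commute (U ^ (2:ℤ)) B := by
  have : U * U * B = B * (U * U) := by
    rw [mul_assoc, hub, ← mul_assoc, hub', mul_assoc]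
  show U ^ (2:ℤ) * B = B * U ^ (2:ℤ); rw [zpow_two]; exact this

lemma conj_even (k : ℤ) : U ^ (2 * k) * B * (U ^ (2 * k))⁻¹ = B := by
  have hc : Commute (U ^ (2 * k)) B := by
    rw [zpow_mul]; exact commU2.zpow_left k
  rw [hc.eq, mul_assoc, mul_inv_cancel, mul_one]

lemma conj_odd (k : ℤ) : U ^ (2 * k + 1) * B * (U ^ (2 * k + 1))⁻¹ = B⁻¹ := by
  have hc : Commute (U ^ (2 * k)) B⁻¹ := by
    have : Commute (U ^ (2 * k)) B := by
      rw [zpow_mul]; exact commU2.zpow_left k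
    exact this.inv_right
  calc U ^ (2*k+1) * B * (U ^ (2*k+1))⁻¹
      = U ^ (2*k) * (U * B * U⁻¹) * (U ^ (2*k))⁻¹ := by
        rw [zpow_add, zpow_one, mul_inv_rev]; group
    _ = U ^ (2*k) * B⁻¹ * (U ^ (2*k))⁻¹ := by rw [key]
    _ = B⁻¹ := by rw [hc.eq, mul_assoc, mul_inv_cancel, mul_one]

def fB : Mz →* KleinGroup := zpowersHom _ B
def fU : Mz →* KleinGroup := zpowersHom _ U

lemma negφ_apply (t : ℤ) : negφ (ofAdd t) = (MulEquiv.inv Mz) ^ t := rfl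

lemma compat' (t : ℤ) :
    fB.comp ((negφ (ofAdd t)).toMonoidHom) =
      (MulAut.conj (fU (ofAdd t))).toMonoidHom.comp fB := by
  apply MonoidHom.ext_mint
  have hfU : fU (ofAdd t) = U ^ t := by simp [fU]
  have hfB : fB (ofAdd 1) = B := by simp [fB]
  simp only [MonoidHom.comp_apply, MulEquiv.coe_toMonoidHom, MulAut.conj_apply, hfU, hfB,
    negφ_apply]
  rcases Int.even_or_odd t with ⟨k, hk⟩ | ⟨k, hk⟩
  · have he : (MulEquiv.inv Mz) ^ t = 1 := by
      rw [hk, show k + k = 2 * k by ring, zpow_mul]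
      norm_cast; rw [invsq]; simp
    rw [he, hk, show k + k = 2 * k by ring]
    simp only [MulAut.one_apply, hfB]
    exact (conj_even k).symm
  · have he : (MulEquiv.inv Mz) ^ t = MulEquiv.inv Mz := by
      rw [hk, zpow_add, zpow_one, zpow_mul]
      norm_cast; rw [invsq]; simp
    rw [he, hk]
    have : fB ((MulEquiv.inv Mz) (ofAdd 1)) = B⁻¹ := by simp [fB, MulEquiv.inv]; exact zpow_neg_one B
    rw [this]
    exact (conj_odd k).symm

lemma compat (g : Mz) :
    fB.comp ((negφ g).toMonoidHom) = (MulAut.conj (fU g)).toMonoidHom.comp fB :=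
  compat' g.toAdd

def ψ : Kb →* KleinGroup := SemidirectProduct.lift fB fU compat

def f : KleinGroup →* Kb :=
  PresentedGroup.toGroup (f := fun b => if b then SemidirectProduct.inr (ofAdd 1)
    else SemidirectProduct.inl (ofAdd 1)) (by
    intro r hr
    rcases hr with rfl
    simp only [map_mul, map_inv, FreeGroup.lift_apply_of, if_true, if_false, Bool.false_eq_true]
    ext <;> rfl)

lemma psi_f : ψ.comp f = MonoidHom.id KleinGroup := by
  apply PresentedGroup.ext
  intro x
  cases x <;> simp [f, ψ, B, U, fB, fU, PresentedGroup.toGroup.of] <;> rfl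

/-- The group `⟨b, u | bub = u⟩` is torsion-free. -/
theorem klein_group_torsion_free : ∀ g : KleinGroup, g ≠ 1 → ¬IsOfFinOrder g := by
  intro g hg hfg
  -- f g has finite order, f g ≠ 1
  have hfg2 : IsOfFinOrder (f g) := f.isOfFinOrder hfg
  have hne : f g ≠ 1 := by
    intro h
    apply hg
    have := congrArg ψ h
    rw [map_one] at this
    have h2 : ψ (f g) = g := congrFun (congrArg DFunLike.coe psi_f) g
    rw [h2] at this; exact this
  -- Kb is torsion-free
  obtain ⟨n, hn, hpow⟩ := isOfFinOrder_iff_pow_eq_one.mp hfg2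
  have hx : ∃ x : Kb, x = f g := ⟨_, rfl⟩
  obtain ⟨x, hx⟩ := hx
  rw [← hx] at hpow hfg2 hne
  have hright : x.right = 1 := by
    have : SemidirectProduct.rightHom x ^ n = 1 := by rw [← map_pow, hpow, map_one]
    rw [SemidirectProduct.rightHom_eq_right] at this
    have hz : (n : ℤ) * (x.right).toAdd = 0 := by
      have := congrArg Multiplicative.toAdd this
      simpa [toAdd_pow] using this
    have : (x.right).toAdd = 0 := by
      rcases mul_eq_zero.mp hz with h | h
      · exact absurd (by exact_mod_cast h) hn.ne'
      · exact h
    exact toAdd_eq_zero.mp this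
  have hxl : x = SemidirectProduct.inl x.left := by
    rw [← SemidirectProduct.inl_left_mul_inr_right x, hright, map_one, mul_one]
    simp
  have hleft : x.left = 1 := by
    have h1 : (SemidirectProduct.inl x.left : Kb) ^ n = 1 := by rw [← hxl]; exact hpow
    rw [← map_pow] at h1
    have h2 : x.left ^ n = 1 := SemidirectProduct.inl_injective (by simpa using h1)
    have hz : (n : ℤ) * (x.left).toAdd = 0 := by
      have := congrArg Multiplicative.toAdd h2
      simpa [toAdd_pow] using this
    have : (x.left).toAdd = 0 := by
      rcases mul_eq_zero.mp hz with h | h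
      · exact absurd (by exact_mod_cast h) hn.ne'
      · exact h
    exact toAdd_eq_zero.mp this
  apply hne
  rw [hxl, hleft, map_one]
end

section
/- In the commutative monoid M presented by generators σ, τ with the single relation σ·τ = σ³, every nonidentity element can be written uniquely as either τ^b for some b ≥ 1 or σ^a for some a ≥ 1; in particular σ^a = σ^{a'} implies a = a', τ^b = τ^{b'} implies b = b', and σ^a ≠ τ^b for all a, b ≥ 1. -/
/-- Relations presenting the commutative monoid `⟨σ, τ | στ = σ³⟩` (as a quotient of the
free monoid on `Bool`, where `false` stands for `σ` and `true` for `τ`): the commutativity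
relation `στ = τσ` together with `στ = σ³`. -/
def surfRels : FreeMonoid Bool → FreeMonoid Bool → Prop := fun x y =>
  (x = FreeMonoid.of false * FreeMonoid.of true ∧
     y = FreeMonoid.of true * FreeMonoid.of false) ∨
  (x = FreeMonoid.of false * FreeMonoid.of true ∧
     y = FreeMonoid.of false * FreeMonoid.of false * FreeMonoid.of false)

/-- The commutative monoid `M = ⟨σ, τ | στ = σ³⟩`. -/
def SurfMonoid := PresentedMonoid surfRels

instance : Monoid SurfMonoid := by unfold SurfMonoid; infer_instance

def SurfMonoid.σ : SurfMonoid := PresentedMonoid.of surfRels false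
def SurfMonoid.τ : SurfMonoid := PresentedMonoid.of surfRels true

/- ## Auxiliary: a concrete model monoid -/

def nmul (p q : ℕ × ℕ) : ℕ × ℕ :=
  if p.1 + q.1 = 0 then (0, p.2 + q.2) else (p.1 + q.1 + 2 * (p.2 + q.2), 0)

lemma nmul_assoc (p q r : ℕ × ℕ) : nmul (nmul p q) r = nmul p (nmul q r) := by
  unfold nmul; split_ifs <;> simp_all [Prod.ext_iff] <;> omega

def NN := {p : ℕ × ℕ // p.1 = 0 ∨ p.2 = 0}

instance : Monoid NN where
  one := ⟨(0,0), Or.inl rfl⟩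
  mul p q := ⟨nmul p.1 q.1, by unfold nmul; split <;> simp⟩
  mul_assoc a b c := Subtype.ext (nmul_assoc a.1 b.1 c.1)
  one_mul p := Subtype.ext (by
    obtain ⟨⟨x, y⟩, h⟩ := p
    show nmul (0,0) (x,y) = (x,y)
    unfold nmul; split_ifs <;> simp_all [Prod.ext_iff] <;> try omega)
  mul_one p := Subtype.ext (by
    obtain ⟨⟨x, y⟩, h⟩ := p
    show nmul (x,y) (0,0) = (x,y)
    unfold nmul; split_ifs <;> simp_all [Prod.ext_iff] <;> try omega)

lemma NN.mul_val (p q : NN) : (p * q).1 = nmul p.1 q.1 := rfl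
lemma NN.one_val : (1 : NN).1 = (0, 0) := rfl

def fNN : Bool → NN := fun b => if b then ⟨(0,1), Or.inl rfl⟩ else ⟨(1,0), Or.inr rfl⟩

lemma fNN_rels : ∀ a b : FreeMonoid Bool, surfRels a b →
    FreeMonoid.lift fNN a = FreeMonoid.lift fNN b := by
  rintro a b (⟨rfl, rfl⟩ | ⟨rfl, rfl⟩) <;> simp [fNN] <;> rfl

def φ : SurfMonoid →* NN := PresentedMonoid.lift fNN fNN_rels

lemma φ_σ : φ SurfMonoid.σ = ⟨(1,0), Or.inr rfl⟩ := rfl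
lemma φ_τ : φ SurfMonoid.τ = ⟨(0,1), Or.inl rfl⟩ := rfl

lemma φ_σ_pow (a : ℕ) (ha : 1 ≤ a) : (φ (SurfMonoid.σ ^ a)).1 = (a, 0) := by
  induction a with
  | zero => omega
  | succ n ih =>
    rcases Nat.eq_or_lt_of_le ha with h | h
    · simp [← h, pow_one, φ_σ]
    · have hn : 1 ≤ n := by omega
      rw [pow_succ, map_mul, NN.mul_val, ih hn, φ_σ]
      simp [nmul, Prod.ext_iff] <;> try omega

lemma φ_τ_pow (b : ℕ) : (φ (SurfMonoid.τ ^ b)).1 = (0, b) := by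
  induction b with
  | zero => simp [NN.one_val]
  | succ n ih =>
    rw [pow_succ, map_mul, NN.mul_val, ih, φ_τ]
    simp [nmul]

/- ## Relations in the monoid -/

lemma rel_comm : SurfMonoid.σ * SurfMonoid.τ = SurfMonoid.τ * SurfMonoid.σ :=
  Quotient.sound (ConGen.Rel.of _ _ (Or.inl ⟨rfl, rfl⟩))

lemma rel_cube : SurfMonoid.σ * SurfMonoid.τ = SurfMonoid.σ * SurfMonoid.σ * SurfMonoid.σ :=
  Quotient.sound (ConGen.Rel.of _ _ (Or.inr ⟨rfl, rfl⟩))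

lemma tau_sigma_pow (a : ℕ) : SurfMonoid.τ * SurfMonoid.σ ^ a = SurfMonoid.σ ^ a * SurfMonoid.τ := by
  induction a with
  | zero => simp
  | succ n ih =>
    rw [pow_succ, ← mul_assoc, ih, mul_assoc, ← rel_comm, ← mul_assoc]

lemma reduce (a b : ℕ) (ha : 1 ≤ a) :
    SurfMonoid.σ ^ a * SurfMonoid.τ ^ b = SurfMonoid.σ ^ (a + 2 * b) := by
  induction b with
  | zero => simp
  | succ n ih =>
    obtain ⟨c, rfl⟩ : ∃ c, a = c + 1 := ⟨a - 1, by omega⟩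
    rw [pow_succ SurfMonoid.τ n, ← mul_assoc, ih]
    have : SurfMonoid.σ ^ (c + 1 + 2 * n) * SurfMonoid.τ
        = SurfMonoid.σ ^ (c + 2 * n) * (SurfMonoid.σ * SurfMonoid.τ) := by
      rw [show c + 1 + 2 * n = c + 2 * n + 1 by ring, pow_succ, mul_assoc]
    rw [this, rel_cube]
    rw [show c + 1 + 2 * (n + 1) = (c + 2 * n) + 1 + 1 + 1 by ring]
    rw [pow_succ, pow_succ, pow_succ]
    simp [mul_assoc]

lemma normal (l : FreeMonoid Bool) :
    ∃ a b : ℕ, PresentedMonoid.mk surfRels l = SurfMonoid.σ ^ a * SurfMonoid.τ ^ b := by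
  induction l using FreeMonoid.recOn with
  | one => exact ⟨0, 0, by simp; rfl⟩
  | of_mul x xs ih =>
    obtain ⟨a, b, hab⟩ := ih
    rw [map_mul, hab]
    cases x with
    | false =>
      exact ⟨a + 1, b, by rw [show PresentedMonoid.mk surfRels (FreeMonoid.of false) = SurfMonoid.σ from rfl]; show (SurfMonoid.σ * (SurfMonoid.σ ^ a * SurfMonoid.τ ^ b) : SurfMonoid) = SurfMonoid.σ ^ (a + 1) * SurfMonoid.τ ^ b; rw [← mul_assoc, ← pow_succ']⟩
    | true =>
      refine ⟨a, b + 1, ?_⟩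
      rw [show PresentedMonoid.mk surfRels (FreeMonoid.of true) = SurfMonoid.τ from rfl]
      show (SurfMonoid.τ * (SurfMonoid.σ ^ a * SurfMonoid.τ ^ b) : SurfMonoid) = SurfMonoid.σ ^ a * SurfMonoid.τ ^ (b + 1)
      rw [
        ← mul_assoc, tau_sigma_pow, mul_assoc, ← pow_succ']


/-- In `M = ⟨σ, τ | στ = σ³⟩`, every nonidentity element is uniquely of the form `σ^a`
(`a ≥ 1`) or `τ^b` (`b ≥ 1`): the powers `σ^a` are pairwise distinct, the powers `τ^b`
are pairwise distinct, and no `σ^a` equals a `τ^b`. -/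
theorem surf_monoid_normal_form :
    (∀ x : SurfMonoid, x ≠ 1 →
        (∃ a : ℕ, 1 ≤ a ∧ x = SurfMonoid.σ ^ a) ∨ (∃ b : ℕ, 1 ≤ b ∧ x = SurfMonoid.τ ^ b)) ∧
    (∀ a a' : ℕ, 1 ≤ a → 1 ≤ a' → SurfMonoid.σ ^ a = SurfMonoid.σ ^ a' → a = a') ∧
    (∀ b b' : ℕ, 1 ≤ b → 1 ≤ b' → SurfMonoid.τ ^ b = SurfMonoid.τ ^ b' → b = b') ∧
    (∀ a b : ℕ, 1 ≤ a → 1 ≤ b → SurfMonoid.σ ^ a ≠ SurfMonoid.τ ^ b) := by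
  refine ⟨?_, ?_, ?_, ?_⟩
  · intro x hx
    obtain ⟨l, rfl⟩ := PresentedMonoid.surjective_mk (x : PresentedMonoid surfRels)
    obtain ⟨a, b, hab⟩ := normal l
    rcases Nat.eq_zero_or_pos a with rfl | ha
    · right
      rcases Nat.eq_zero_or_pos b with rfl | hb
      · exact absurd (by simp at hab; exact hab) hx
      · exact ⟨b, hb, by simp at hab; exact hab⟩
    · left
      exact ⟨a + 2 * b, by omega, by rw [hab, reduce a b ha]⟩
  · intro a a' ha ha' h
    have h2 : ((a : ℕ), (0 : ℕ)) = ((a' : ℕ), (0 : ℕ)) := by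
      rw [← φ_σ_pow a ha, ← φ_σ_pow a' ha', h]
    simpa using h2
  · intro b b' _ _ h
    have h2 : ((0 : ℕ), (b : ℕ)) = ((0 : ℕ), (b' : ℕ)) := by
      rw [← φ_τ_pow b, ← φ_τ_pow b', h]
    simpa using h2
  · intro a b ha _ h
    have h2 : ((a : ℕ), (0 : ℕ)) = ((0 : ℕ), (b : ℕ)) := by
      rw [← φ_σ_pow a ha, ← φ_τ_pow b, h]
    simp at h2
    omega
end

section
/- There is a well-defined monoid homomorphism h from the commutative monoid M = ⟨σ, τ | στ = σ³⟩ to (ℕ, +) with h(σ) = 1 and h(τ) = 2, and for every n ≥ 1 the fiber h⁻¹(n) has exactly two elements if n is even (namely σⁿ and τ^{n/2}) and exactly one element if n is odd (namely σⁿ). -/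
namespace SurfMonoid

lemma rel_comm : σ * τ = τ * σ :=
  Quotient.sound (ConGen.Rel.of _ _ (Or.inl ⟨rfl, rfl⟩))

lemma rel_cube : σ * τ = σ * σ * σ :=
  Quotient.sound (ConGen.Rel.of _ _ (Or.inr ⟨rfl, rfl⟩))

lemma sigma_pow_tau (a b : ℕ) (ha : 1 ≤ a) : σ ^ a * τ ^ b = σ ^ (a + 2 * b) := by
  induction b generalizing a with
  | zero => simp
  | succ b ih =>
    obtain ⟨a, rfl⟩ := Nat.exists_eq_add_of_le ha
    have h1 : σ ^ (1 + a) * τ ^ (b + 1) = σ ^ a * (σ * τ) * τ ^ b := by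
      rw [add_comm 1 a, pow_succ, pow_succ', mul_assoc (σ ^ a) σ, ← mul_assoc σ τ, ← mul_assoc]
    have h2 : σ ^ a * (σ * σ * σ) = σ ^ (a + 3) := by
      rw [pow_add]
      congr 1
    rw [h1, rel_cube, h2, ih _ (by omega)]
    congr 1
    omega

lemma tau_sigma_pow (a : ℕ) : τ * σ ^ a = σ ^ a * τ := by
  induction a with
  | zero => simp
  | succ a ih2 => rw [pow_succ, ← mul_assoc, ih2, mul_assoc, ← rel_comm, ← mul_assoc, ← pow_succ]

lemma classify (x : SurfMonoid) : ∃ a b : ℕ, x = σ ^ a * τ ^ b := by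
  refine PresentedMonoid.inductionOn x ?_
  intro w
  induction w using FreeMonoid.inductionOn' with
  | one => exact ⟨0, 0, by simp; rfl⟩
  | of_mul c w ih =>
    obtain ⟨a, b, hab⟩ := ih
    rw [map_mul, hab]
    cases c
    · exact ⟨a + 1, b, by rw [pow_succ']; show σ * _ = _; rw [mul_assoc]⟩
    · refine ⟨a, b + 1, ?_⟩
      show τ * (σ ^ a * τ ^ b) = _
      rw [← mul_assoc, tau_sigma_pow, mul_assoc, ← pow_succ']

def grading : SurfMonoid →* Multiplicative ℕ :=
  PresentedMonoid.lift (fun b => if b then Multiplicative.ofAdd 2 else Multiplicative.ofAdd 1)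
    (by rintro _ _ (⟨rfl, rfl⟩ | ⟨rfl, rfl⟩) <;> rfl)

def inv : SurfMonoid →* ℕ :=
  PresentedMonoid.lift (fun b => if b then 1 else 0)
    (by rintro _ _ (⟨rfl, rfl⟩ | ⟨rfl, rfl⟩) <;> rfl)

lemma grading_σ : grading σ = Multiplicative.ofAdd 1 := rfl
lemma grading_τ : grading τ = Multiplicative.ofAdd 2 := rfl
lemma inv_σ : inv σ = 0 := rfl
lemma inv_τ : inv τ = 1 := rfl

lemma grading_apply (a b : ℕ) :
    grading (σ ^ a * τ ^ b) = Multiplicative.ofAdd (a + 2 * b) := by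
  rw [map_mul, map_pow, map_pow, grading_σ, grading_τ, ← ofAdd_nsmul, ← ofAdd_nsmul, ← ofAdd_add]
  congr 1
  simp [mul_comm]

lemma pow_ne (n : ℕ) (hn : 1 ≤ n) (m : ℕ) : σ ^ n ≠ τ ^ m := by
  intro heq
  have := congrArg inv heq
  rw [map_pow, map_pow, inv_σ, inv_τ, one_pow, zero_pow (by omega)] at this
  exact zero_ne_one this

end SurfMonoid

/-- There is a monoid homomorphism `h : M → (ℕ, +)` with `h(σ) = 1`, `h(τ) = 2`, whose
fiber over `n ≥ 1` is `{σ^n, τ^(n/2)}` (two distinct elements) when `n` is even and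
`{σ^n}` when `n` is odd. -/
theorem surf_monoid_grading :
    ∃ h : SurfMonoid →* Multiplicative ℕ,
      h SurfMonoid.σ = Multiplicative.ofAdd 1 ∧
      h SurfMonoid.τ = Multiplicative.ofAdd 2 ∧
      ∀ n : ℕ, 1 ≤ n →
        (Even n →
          {x : SurfMonoid | h x = Multiplicative.ofAdd n} =
            {SurfMonoid.σ ^ n, SurfMonoid.τ ^ (n / 2)} ∧
          SurfMonoid.σ ^ n ≠ SurfMonoid.τ ^ (n / 2)) ∧
        (Odd n →
          {x : SurfMonoid | h x = Multiplicative.ofAdd n} = {SurfMonoid.σ ^ n}) := by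

  classical
  refine ⟨SurfMonoid.grading, rfl, rfl, fun n hn => ?_⟩
  have key : ∀ x : SurfMonoid, SurfMonoid.grading x = Multiplicative.ofAdd n →
      x = SurfMonoid.σ ^ n ∨ (Even n ∧ x = SurfMonoid.τ ^ (n / 2)) := by
    intro x hx
    obtain ⟨a, b, rfl⟩ := SurfMonoid.classify x
    rw [SurfMonoid.grading_apply] at hx
    have hab : a + 2 * b = n := Multiplicative.ofAdd.injective hx
    rcases Nat.eq_zero_or_pos a with ha | ha
    · rcases Nat.eq_zero_or_pos b with hb | hb
      · subst ha hb; omega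
      · right
        subst ha
        refine ⟨⟨b, by omega⟩, ?_⟩
        rw [pow_zero, one_mul]
        congr 1
        omega
    · left
      rw [SurfMonoid.sigma_pow_tau a b ha, hab]
  constructor
  · intro hev
    refine ⟨?_, SurfMonoid.pow_ne n hn _⟩
    ext x
    simp only [Set.mem_setOf_eq, Set.mem_insert_iff, Set.mem_singleton_iff]
    constructor
    · intro hx
      rcases key x hx with h1 | ⟨_, h2⟩
      · exact Or.inl h1
      · exact Or.inr h2
    · rintro (rfl | rfl)
      · have := SurfMonoid.grading_apply n 0
        simpa using this
      · have := SurfMonoid.grading_apply 0 (n / 2)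
        simp only [pow_zero, one_mul, zero_add] at this
        rw [this, Nat.two_mul_div_two_of_even hev]
  · intro hodd
    ext x
    simp only [Set.mem_setOf_eq, Set.mem_singleton_iff]
    constructor
    · intro hx
      rcases key x hx with h1 | ⟨hev, _⟩
      · exact h1
      · exact absurd hev (Nat.not_even_iff_odd.mpr hodd)
    · rintro rfl
      have := SurfMonoid.grading_apply n 0
      simpa using this
end
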